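/- Assume the setup below, and let U ∈ ℝ^{d×d} be symmetric positive definite with U ≼ (1/L_Ω)I. Fix w_{t-1}, v_{t-1} ∈ ℝ^d and set w_t = prox_R^{U^{-1}}(w_{t-1} − U v_{t-1}). For each b-tuple ι = (i_1,…,i_b) ∈ {1,…,n}^b define v_t(ι) = (1/b)∑_{j=1}^b (∇f_{i_j}(w_t) − ∇f_{i_j}(w_{t-1}))/(q_{i_j} n) + v_{t-1} and w_{t+1}(ι) = prox_R^{U^{-1}}(w_t − U v_t(ι)). Then the expectation over ι drawn with i.i.d. coordinates from the distribution (q_1,…,q_n) satisfies ∑_{ι ∈ {1,…,n}^b} (∏_{j=1}^b q_{i_j}) · ‖w_{t+1}(ι) − w_t‖_{U^{-1}}² ≤ ‖w_t − w_{t-1}‖_{U^{-1}}². -/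

import Mathlib

open scoped BigOperators RealInnerProductSpace

/-- `ℝ^d` as Euclidean space. -/
abbrev Euc (d : ℕ) := EuclideanSpace ℝ (Fin d)

/-- Action of a `d × d` real matrix on a vector of `ℝ^d`. -/
noncomputable def mdot {d : ℕ} (M : Matrix (Fin d) (Fin d) ℝ) (x : Euc d) : Euc d :=
  Matrix.toEuclideanLin M x

/-- The quadratic form `‖x‖_M² = xᵀ M x` associated with a matrix `M`. -/
noncomputable def qf {d : ℕ} (M : Matrix (Fin d) (Fin d) ℝ) (x : Euc d) : ℝ :=
  ⟪x, mdot M x⟫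

/-- `u` is a point of the scaled proximal operator `prox_R^M (w)`, i.e. a minimizer of
`y ↦ (1/2)‖y - w‖_M² + R y`, for an extended-real-valued `R`. -/
def IsProxE {d : ℕ} (R : Euc d → EReal) (M : Matrix (Fin d) (Fin d) ℝ) (w u : Euc d) : Prop :=
  ∀ y, ((2⁻¹ * qf M (u - w) : ℝ) : EReal) + R u ≤ ((2⁻¹ * qf M (y - w) : ℝ) : EReal) + R y

/-- Convexity of an extended-real-valued function on `ℝ^d`. -/
def ERealConvexOn {d : ℕ} (R : Euc d → EReal) : Prop :=
  ∀ x y : Euc d, ∀ a b : ℝ, 0 ≤ a → 0 ≤ b → a + b = 1 →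
    R (a • x + b • y) ≤ (a : EReal) * R x + (b : EReal) * R y

/-- Properness of an extended-real-valued function: never `-∞`, and finite somewhere. -/
def ERealProper {d : ℕ} (R : Euc d → EReal) : Prop :=
  (∀ x, R x ≠ ⊥) ∧ (∃ x, R x ≠ ⊤)

/-- The average `F = (1/n) ∑ᵢ fᵢ`. -/
noncomputable def Favg {d n : ℕ} (f : Fin n → Euc d → ℝ) (x : Euc d) : ℝ :=
  (n : ℝ)⁻¹ * ∑ i, f i x

/-- The averaged gradient `∇F = (1/n) ∑ᵢ ∇fᵢ`. -/
noncomputable def gAvg {d n : ℕ} (gf : Fin n → Euc d → Euc d) (x : Euc d) : Euc d :=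
  (n : ℝ)⁻¹ • ∑ i, gf i x

section quad
variable {d : ℕ} {M : Matrix (Fin d) (Fin d) ℝ}

lemma mdot_sub (M : Matrix (Fin d) (Fin d) ℝ) (x y : Euc d) :
    mdot M (x - y) = mdot M x - mdot M y := map_sub _ _ _
lemma mdot_add (M : Matrix (Fin d) (Fin d) ℝ) (x y : Euc d) :
    mdot M (x + y) = mdot M x + mdot M y := map_add _ _ _
lemma mdot_smul (M : Matrix (Fin d) (Fin d) ℝ) (c : ℝ) (x : Euc d) :
    mdot M (c • x) = c • mdot M x := map_smul _ _ _
lemma mdot_sum (M : Matrix (Fin d) (Fin d) ℝ) {ι : Type*} (s : Finset ι) (z : ι → Euc d) :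
    mdot M (∑ j ∈ s, z j) = ∑ j ∈ s, mdot M (z j) := map_sum _ _ _
lemma mdot_one {d : ℕ} (x : Euc d) : mdot 1 x = x := by
  simp [mdot, Matrix.toEuclideanLin_apply]
lemma mdot_matsub (M N : Matrix (Fin d) (Fin d) ℝ) (x : Euc d) :
    mdot (M - N) x = mdot M x - mdot N x := by simp [mdot, map_sub]
lemma mdot_matsmul (c : ℝ) (M : Matrix (Fin d) (Fin d) ℝ) (x : Euc d) :
    mdot (c • M) x = c • mdot M x := by simp [mdot, map_smul]
lemma mdot_mul (M N : Matrix (Fin d) (Fin d) ℝ) (x : Euc d) :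
    mdot (M * N) x = mdot M (mdot N x) := by
  simp [mdot, Matrix.toEuclideanLin_apply, Matrix.mulVec_mulVec]

lemma mdot_symm (h : M.IsHermitian) (x y : Euc d) : ⟪x, mdot M y⟫ = ⟪mdot M x, y⟫ := by
  have := (Matrix.isHermitian_iff_isSymmetric.mp h) x y
  simpa [mdot] using this.symm

lemma inner_mdot_comm (h : M.IsHermitian) (x y : Euc d) : ⟪x, mdot M y⟫ = ⟪y, mdot M x⟫ := by
  rw [mdot_symm h, real_inner_comm]

lemma qf_nonneg (h : M.PosSemidef) (x : Euc d) : 0 ≤ qf M x := by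
  have h2 := h.dotProduct_mulVec_nonneg ((WithLp.equiv 2 _) x)
  simp only [qf, mdot, Matrix.toEuclideanLin_apply, PiLp.inner_apply, RCLike.inner_apply,
    conj_trivial] at *
  simpa [dotProduct, mul_comm] using h2

lemma qf_sub (h : M.IsHermitian) (x y : Euc d) :
    qf M (x - y) = qf M x - 2 * ⟪x, mdot M y⟫ + qf M y := by
  simp only [qf, mdot_sub, inner_sub_left, inner_sub_right]
  rw [inner_mdot_comm h y x]
  ring

lemma qf_add (h : M.IsHermitian) (x y : Euc d) :
    qf M (x + y) = qf M x + 2 * ⟪x, mdot M y⟫ + qf M y := by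
  simp only [qf, mdot_add, inner_add_left, inner_add_right]
  rw [inner_mdot_comm h y x]
  ring

lemma qf_smul (c : ℝ) (x : Euc d) : qf M (c • x) = c^2 * qf M x := by
  simp only [qf, mdot_smul, inner_smul_left, inner_smul_right, conj_trivial]
  ring

lemma two_inner_le (hs : M.IsHermitian) (hp : M.PosSemidef) (x y : Euc d) :
    2 * ⟪x, mdot M y⟫ ≤ qf M x + qf M y := by
  have := qf_nonneg hp (x - y)
  rw [qf_sub hs] at this; linarith

/-- Jensen-type bound: `qf M (b⁻¹ • ∑ z j) ≤ b⁻¹ * ∑ qf M (z j)`. -/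
lemma qf_avg_le (hs : M.IsHermitian) (hp : M.PosSemidef) {b : ℕ} (hb : 1 ≤ b)
    (z : Fin b → Euc d) :
    qf M ((b : ℝ)⁻¹ • ∑ j, z j) ≤ (b : ℝ)⁻¹ * ∑ j, qf M (z j) := by
  have hbpos : (0:ℝ) < b := by exact_mod_cast hb
  have key : qf M (∑ j, z j) ≤ (b : ℝ) * ∑ j, qf M (z j) := by
    have expand : qf M (∑ j, z j) = ∑ j, ∑ k, ⟪z j, mdot M (z k)⟫ := by
      simp only [qf, mdot_sum, inner_sum, sum_inner]
      rw [Finset.sum_comm]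
    rw [expand]
    have hle : ∀ j k : Fin b, ⟪z j, mdot M (z k)⟫ ≤ (qf M (z j) + qf M (z k)) / 2 := by
      intro j k; have := two_inner_le hs hp (z j) (z k); linarith
    calc ∑ j, ∑ k, ⟪z j, mdot M (z k)⟫ ≤ ∑ j : Fin b, ∑ k : Fin b, (qf M (z j) + qf M (z k)) / 2 := by
          apply Finset.sum_le_sum; intro j _; apply Finset.sum_le_sum; intro k _; exact hle j k
      _ = (b : ℝ) * ∑ j, qf M (z j) := by
          have h1 : ∀ j : Fin b, ∑ k : Fin b, (qf M (z j) + qf M (z k)) / 2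
              = (b : ℝ) / 2 * qf M (z j) + (∑ k, qf M (z k)) / 2 := by
            intro j
            rw [← Finset.sum_div, Finset.sum_add_distrib, Finset.sum_const,
              Finset.card_univ, Fintype.card_fin, nsmul_eq_mul]
            ring
          rw [Finset.sum_congr rfl (fun j _ => h1 j), Finset.sum_add_distrib,
            ← Finset.mul_sum, Finset.sum_const, Finset.card_univ, Fintype.card_fin,
            nsmul_eq_mul]
          ring
  rw [qf_smul]
  calc ((b:ℝ)⁻¹)^2 * qf M (∑ j, z j) ≤ ((b:ℝ)⁻¹)^2 * ((b:ℝ) * ∑ j, qf M (z j)) := by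
        apply mul_le_mul_of_nonneg_left key (by positivity)
    _ = (b : ℝ)⁻¹ * ∑ j, qf M (z j) := by field_simp
end quad

section prox
variable {d : ℕ} {R : Euc d → EReal} {M : Matrix (Fin d) (Fin d) ℝ}

lemma prox_ne_top (hproper : ERealProper R) {a u : Euc d} (h : IsProxE R M a u) : R u ≠ ⊤ := by
  obtain ⟨x0, hx0⟩ := hproper.2
  intro htop
  have hle := h x0
  rw [htop, EReal.coe_add_top, top_le_iff] at hle
  have hx0b := hproper.1 x0
  rw [← EReal.coe_toReal hx0 hx0b, ← EReal.coe_add] at hle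
  exact EReal.coe_ne_top _ hle

/-- Subgradient inequality at the prox point. -/
lemma prox_subgrad (hproper : ERealProper R) (hconv : ERealConvexOn R)
    (hs : M.IsHermitian) (hp : M.PosSemidef)
    {a u : Euc d} (h : IsProxE R M a u) (y : Euc d) (hy : R y ≠ ⊤) :
    0 ≤ ⟪u - a, mdot M (y - u)⟫ + (R y).toReal - (R u).toReal := by
  have hut := prox_ne_top hproper h
  have hub := hproper.1 u
  have hyb := hproper.1 y
  set ru := (R u).toReal with hru
  set ry := (R y).toReal with hry
  have hRu : R u = (ru : EReal) := (EReal.coe_toReal hut hub).symm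
  have hRy : R y = (ry : EReal) := (EReal.coe_toReal hy hyb).symm
  have key : ∀ t : ℝ, 0 < t → t ≤ 1 →
      0 ≤ ⟪u - a, mdot M (y - u)⟫ + ry - ru + t * (2⁻¹ * qf M (y - u)) := by
    intro t ht ht1
    have hcv := hconv u y (1 - t) t (by linarith) (le_of_lt ht) (by ring)
    rw [hRu, hRy, ← EReal.coe_mul, ← EReal.coe_mul, ← EReal.coe_add] at hcv
    have hopt := h ((1 - t) • u + t • y)
    have hle : ((2⁻¹ * qf M (u - a) : ℝ) : EReal) + (ru : EReal) ≤
        ((2⁻¹ * qf M ((1 - t) • u + t • y - a) : ℝ) : EReal) + (((1 - t) * ru + t * ry : ℝ) : EReal) := by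
      rw [← hRu]
      exact hopt.trans (add_le_add_right hcv _)
    rw [← EReal.coe_add, ← EReal.coe_add, EReal.coe_le_coe_iff] at hle
    have hz : (1 - t) • u + t • y - a = (u - a) + t • (y - u) := by
      rw [sub_smul, one_smul, smul_sub]; abel
    rw [hz, qf_add hs, mdot_smul, inner_smul_right, qf_smul] at hle
    nlinarith [hle]
  by_contra hcon
  push_neg at hcon
  set c := ⟪u - a, mdot M (y - u)⟫ + ry - ru with hc
  set Q2 := 2⁻¹ * qf M (y - u) with hQ2
  have hQn : 0 ≤ qf M (y - u) := qf_nonneg hp (y - u)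
  have hQ2n : 0 ≤ Q2 := by rw [hQ2]; positivity
  have hcneg : c < 0 := hcon
  have htpos : 0 < min 1 ((-c)/(Q2+1)) := lt_min one_pos (div_pos (by linarith) (by linarith))
  have ht1 : min 1 ((-c)/(Q2+1)) ≤ 1 := min_le_left _ _
  have hk := key _ htpos ht1
  have hle2 : min 1 ((-c)/(Q2+1)) * Q2 ≤ ((-c)/(Q2+1)) * Q2 :=
    mul_le_mul_of_nonneg_right (min_le_right _ _) hQ2n
  have hlt : ((-c)/(Q2+1)) * Q2 < -c := by
    rw [div_mul_eq_mul_div, div_lt_iff₀ (by linarith)]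
    nlinarith
  linarith

/-- Prox operators are nonexpansive in the `M`-norm. -/
lemma prox_contract (hproper : ERealProper R) (hconv : ERealConvexOn R)
    (hs : M.IsHermitian) (hp : M.PosSemidef)
    {a a' u u' : Euc d} (h : IsProxE R M a u) (h' : IsProxE R M a' u') :
    qf M (u - u') ≤ qf M (a - a') := by
  have s1 := prox_subgrad hproper hconv hs hp h u' (prox_ne_top hproper h')
  have s2 := prox_subgrad hproper hconv hs hp h' u (prox_ne_top hproper h)
  have hmono : qf M (u - u') ≤ ⟪u - u', mdot M (a - a')⟫ := by
    have C : ∀ p z : Euc d, ⟪p, mdot M z⟫ = ⟪z, mdot M p⟫ := inner_mdot_comm hs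
    show ⟪u - u', mdot M (u - u')⟫ ≤ ⟪u - u', mdot M (a - a')⟫
    simp only [mdot_sub, inner_sub_left, inner_sub_right] at s1 s2 ⊢
    linarith [C u a, C u a', C u u', C a a', C a u', C u' a']
  have := two_inner_le hs hp (u - u') (a - a')
  linarith

end prox

section cvx
variable {d : ℕ} {f : Euc d → ℝ} {g : Euc d → Euc d}

lemma grad_line (hg : ∀ x, HasGradientAt f (g x) x) (x v : Euc d) (t : ℝ) :
    HasDerivAt (fun s : ℝ => f (x + s • v)) ⟪g (x + t • v), v⟫ t := by
  have hc : HasDerivAt (fun s : ℝ => x + s • v) v t := by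
    simpa using ((hasDerivAt_id t).smul_const v).const_add x
  have := (hg (x + t • v)).hasFDerivAt.comp_hasDerivAt t hc
  simp only [InnerProductSpace.toDual_apply_apply] at this
  exact this

lemma grad_subgrad (hconv : ConvexOn ℝ Set.univ f) (hg : ∀ x, HasGradientAt f (g x) x)
    (x y : Euc d) : f x + ⟪g x, y - x⟫ ≤ f y := by
  set φ : ℝ → ℝ := fun s => f (x + s • (y - x)) with hφ
  have hφconv : ConvexOn ℝ Set.univ φ := by
    have := hconv.comp_affineMap (AffineMap.lineMap x y)
    refine (show φ = f ∘ AffineMap.lineMap x y from ?_) ▸ this.subset (Set.subset_univ _) convex_univ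
    funext s
    simp [hφ, AffineMap.lineMap_apply, Function.comp]
    congr 1
    module
  have hd : HasDerivAt φ ⟪g x, y - x⟫ 0 := by
    have := grad_line hg x (y - x) 0
    simpa using this
  have hslope := hφconv.le_slope_of_hasDerivAt (Set.mem_univ 0) (Set.mem_univ 1) one_pos hd
  rw [slope_def_field] at hslope
  have h0 : φ 0 = f x := by simp [hφ]
  have h1 : φ 1 = f y := by simp [hφ]
  rw [h0, h1, show (1:ℝ) - 0 = 1 by norm_num, div_one] at hslope
  linarith

lemma grad_mono (hconv : ConvexOn ℝ Set.univ f) (hg : ∀ x, HasGradientAt f (g x) x)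
    (x y : Euc d) : 0 ≤ ⟪g x - g y, x - y⟫ := by
  have h1 := grad_subgrad hconv hg x y
  have h2 := grad_subgrad hconv hg y x
  simp only [inner_sub_left, inner_sub_right] at *
  linarith

lemma grad_descent {L : ℝ} (hg : ∀ x, HasGradientAt f (g x) x)
    (hLip : ∀ x y, ‖g x - g y‖ ≤ L * ‖x - y‖) (x y : Euc d) :
    f y ≤ f x + ⟪g x, y - x⟫ + L * ‖y - x‖^2 := by
  rcases eq_or_ne x y with rfl | hxy
  · simp
  have hL0 : 0 ≤ L := by
    have := hLip x y
    have hpos : 0 < ‖x - y‖ := by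
      rw [norm_pos_iff, sub_ne_zero]; exact hxy
    nlinarith [norm_nonneg (g x - g y)]
  have key : ‖f y - f x - (InnerProductSpace.toDual ℝ (Euc d) (g x)) (y - x)‖ ≤
      (L * ‖y - x‖) * ‖y - x‖ := by
    apply Convex.norm_image_sub_le_of_norm_hasFDerivWithin_le'
      (f' := fun z => InnerProductSpace.toDual ℝ (Euc d) (g z))
      (fun z _ => (hg z).hasFDerivAt.hasFDerivWithinAt) ?_ (convex_segment x y)
      (left_mem_segment ℝ x y) (right_mem_segment ℝ x y)
    intro z hz
    rw [← map_sub]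
    rw [LinearIsometryEquiv.norm_map]
    calc ‖g z - g x‖ ≤ L * ‖z - x‖ := hLip z x
      _ ≤ L * ‖y - x‖ := by
          apply mul_le_mul_of_nonneg_left _ hL0
          obtain ⟨a, c, ha, hc, hac, rfl⟩ := hz
          have : a • x + c • y - x = c • (y - x) := by
            rw [smul_sub]
            rw [show a = 1 - c by linarith]
            module
          rw [this, norm_smul]
          have hc1 : |c| ≤ 1 := by rw [abs_of_nonneg hc]; linarith
          exact mul_le_of_le_one_left (norm_nonneg _) hc1
  have := (abs_le.mp (by rwa [Real.norm_eq_abs] at key)).2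
  rw [InnerProductSpace.toDual_apply_apply] at this
  nlinarith [this]

lemma grad_coco {L : ℝ} (hconv : ConvexOn ℝ Set.univ f) (hg : ∀ x, HasGradientAt f (g x) x)
    (hLip : ∀ x y, ‖g x - g y‖ ≤ L * ‖x - y‖) (x y : Euc d) :
    ‖g x - g y‖^2 ≤ 2 * L * ⟪g x - g y, x - y⟫ := by
  rcases eq_or_ne (g x) (g y) with he | hne
  · simp [he, sub_self]
  have hL : 0 < L := by
    have h1 := hLip x y
    have h2 : 0 < ‖g x - g y‖ := by rw [norm_pos_iff, sub_ne_zero]; exact hne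
    nlinarith [norm_nonneg (x - y)]
  -- one-sided improvement of the subgradient inequality
  have key : ∀ p w : Euc d, f p + ⟪g p, w - p⟫ + (4*L)⁻¹ * ‖g w - g p‖^2 ≤ f w := by
    intro p w
    set δ := g w - g p with hδ
    set z := w - (2*L)⁻¹ • δ with hz
    have hdesc := grad_descent hg hLip w z
    have hzw : z - w = -((2*L)⁻¹ • δ) := by rw [hz]; abel
    have hnorm : ‖z - w‖^2 = ((2*L)⁻¹)^2 * ‖δ‖^2 := by
      rw [hzw, norm_neg, norm_smul, mul_pow, Real.norm_eq_abs, sq_abs]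
    have hinner : ⟪g w, z - w⟫ = -((2*L)⁻¹ * ⟪g w, δ⟫) := by
      rw [hzw, inner_neg_right, inner_smul_right]
    rw [hnorm, hinner] at hdesc
    have hsub := grad_subgrad hconv hg p z
    have hinner2 : ⟪g p, z - p⟫ = ⟪g p, w - p⟫ - (2*L)⁻¹ * ⟪g p, δ⟫ := by
      rw [hz, show w - (2*L)⁻¹ • δ - p = (w - p) - (2*L)⁻¹ • δ by abel, inner_sub_right,
        inner_smul_right]
    rw [hinner2] at hsub
    have hdd : ⟪g w, δ⟫ - ⟪g p, δ⟫ = ‖δ‖^2 := by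
      rw [← inner_sub_left, ← hδ, real_inner_self_eq_norm_sq]
    have hLinv : (0:ℝ) < (2*L)⁻¹ := by positivity
    have expand : L * (((2*L)⁻¹)^2 * ‖δ‖^2) = (4*L)⁻¹ * ‖δ‖^2 := by
      field_simp; ring
    have e2 : (2*L)⁻¹ * ‖δ‖^2 = 2 * ((4*L)⁻¹ * ‖δ‖^2) := by field_simp; ring
    have e3 : (2*L)⁻¹ * ⟪g w, δ⟫ - (2*L)⁻¹ * ⟪g p, δ⟫ = (2*L)⁻¹ * ‖δ‖^2 := by
      rw [← mul_sub, hdd]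
    linarith [hsub, hdesc, e2, e3, expand]
  have k1 := key x y
  have k2 := key y x
  have hsq : ‖g y - g x‖^2 = ‖g x - g y‖^2 := by rw [norm_sub_rev]
  have hi : ⟪g x, y - x⟫ + ⟪g y, x - y⟫ = -⟪g x - g y, x - y⟫ := by
    simp only [inner_sub_left, inner_sub_right]; ring
  have h5 : 2*((4*L)⁻¹ * ‖g x - g y‖^2) ≤ ⟪g x - g y, x - y⟫ := by
    have hsq' : (4*L)⁻¹ * ‖g y - g x‖^2 = (4*L)⁻¹ * ‖g x - g y‖^2 := by rw [hsq]
    linarith [k1, k2, hi, hsq']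
  calc ‖g x - g y‖^2 = 2*L*(2*((4*L)⁻¹ * ‖g x - g y‖^2)) := by field_simp; ring
    _ ≤ 2*L*⟪g x - g y, x - y⟫ := mul_le_mul_of_nonneg_left h5 (by positivity)
end cvx

section expect
variable {n b : ℕ} {q : Fin n → ℝ}

lemma pi_mass (hqs : ∑ i, q i = 1) :
    ∑ ι : Fin b → Fin n, ∏ j : Fin b, q (ι j) = 1 := by
  have h := Finset.prod_univ_sum (fun _ : Fin b => (Finset.univ : Finset (Fin n)))
    (fun _ i => q i)
  rw [Fintype.piFinset_univ] at h
  rw [← h]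
  simp [hqs]

lemma pi_marginal (hqs : ∑ i, q i = 1) (h : Fin n → ℝ) (j : Fin b) :
    ∑ ι : Fin b → Fin n, (∏ k : Fin b, q (ι k)) * h (ι j) = ∑ i, q i * h i := by
  have step1 : ∀ ι : Fin b → Fin n,
      (∏ k : Fin b, q (ι k)) * h (ι j)
        = ∏ k : Fin b, (fun k i => q i * (if k = j then h i else 1)) k (ι k) := by
    intro ι
    rw [Finset.prod_mul_distrib]
    congr 1
    rw [Finset.prod_ite_eq' Finset.univ j (fun k => h (ι k))]
    simp
  rw [Finset.sum_congr rfl (fun ι _ => step1 ι)]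
  have h2 := Finset.prod_univ_sum (fun _ : Fin b => (Finset.univ : Finset (Fin n)))
    (fun k i => q i * (if k = j then h i else 1))
  rw [Fintype.piFinset_univ] at h2
  rw [← h2]
  have h3 : ∀ k : Fin b, ∑ i, q i * (if k = j then h i else 1)
      = if k = j then ∑ i, q i * h i else 1 := by
    intro k
    by_cases hk : k = j <;> simp [hk, hqs]
  rw [Finset.prod_congr rfl (fun k _ => h3 k)]
  rw [Finset.prod_ite_eq' Finset.univ j (fun _ => ∑ i, q i * h i)]
  simp
end expect

lemma pi_avg {n b : ℕ} {q : Fin n → ℝ} (hqs : ∑ i, q i = 1) (hb : 1 ≤ b) (w : Fin n → ℝ) :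
    ∑ ι : Fin b → Fin n, (∏ k : Fin b, q (ι k)) * ((b:ℝ)⁻¹ * ∑ j : Fin b, w (ι j))
      = ∑ i, q i * w i := by
  have hb' : (0:ℝ) < b := by exact_mod_cast hb
  have e1 : ∀ ι : Fin b → Fin n, (∏ k : Fin b, q (ι k)) * ((b:ℝ)⁻¹ * ∑ j : Fin b, w (ι j))
      = ∑ j : Fin b, (b:ℝ)⁻¹ * ((∏ k : Fin b, q (ι k)) * w (ι j)) := by
    intro ι
    rw [Finset.mul_sum, Finset.mul_sum]
    exact Finset.sum_congr rfl (fun j _ => by ring)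
  rw [Finset.sum_congr rfl (fun ι _ => e1 ι), Finset.sum_comm]
  have e2 : ∀ j : Fin b, (∑ ι : Fin b → Fin n, (b:ℝ)⁻¹ * ((∏ k : Fin b, q (ι k)) * w (ι j)))
      = (b:ℝ)⁻¹ * ∑ i, q i * w i := by
    intro j
    rw [← Finset.mul_sum, pi_marginal hqs w j]
  rw [Finset.sum_congr rfl (fun j _ => e2 j), Finset.sum_const, Finset.card_univ,
    Fintype.card_fin, nsmul_eq_mul]
  field_simp

/-- The scaled difference of gradients. -/
noncomputable def Zv {d n : ℕ} (gf : Fin n → Euc d → Euc d) (q : Fin n → ℝ)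
    (wt wprev : Euc d) (i : Fin n) : Euc d :=
  (q i * (n : ℝ))⁻¹ • (gf i wt - gf i wprev)

/-- The averaged variance-reduced direction increment over a batch. -/
noncomputable def Dv {d n b : ℕ} (gf : Fin n → Euc d → Euc d) (q : Fin n → ℝ)
    (wt wprev : Euc d) (ι : Fin b → Fin n) : Euc d :=
  (b : ℝ)⁻¹ • ∑ j : Fin b, Zv gf q wt wprev (ι j)

set_option maxHeartbeats 1600000 in
/-- with the finite-sum setup and `U ≼ (1/L_Ω)I` symmetric positive definite, if
`w_t = prox_R^{U⁻¹}(w_{t−1} − Uv_{t−1})` and, for each batch `ι ∈ {1,…,n}^b`,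
`v_t(ι) = (1/b)∑ⱼ (∇f_{ιⱼ}(w_t) − ∇f_{ιⱼ}(w_{t−1}))/(q_{ιⱼ} n) + v_{t−1}` and
`w_{t+1}(ι) = prox_R^{U⁻¹}(w_t − Uv_t(ι))`, then
`E_ι ‖w_{t+1}(ι) − w_t‖_{U⁻¹}² ≤ ‖w_t − w_{t−1}‖_{U⁻¹}²`. -/
theorem prox_recursive_step_nonincreasing {d n b : ℕ} (hn : 0 < n) (hb : 1 ≤ b) (hbn : b ≤ n)
    (f : Fin n → Euc d → ℝ) (gf : Fin n → Euc d → Euc d)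
    (hgrad : ∀ i x, HasGradientAt (f i) (gf i x) x)
    (hconvf : ∀ i, ConvexOn ℝ Set.univ (f i))
    (L : Fin n → ℝ) (hLip : ∀ i x y, ‖gf i x - gf i y‖ ≤ L i * ‖x - y‖)
    (q : Fin n → ℝ) (hq : ∀ i, 0 < q i) (hqs : ∑ i, q i = 1)
    (LΩ : ℝ) (hLΩ : IsGreatest (Set.range fun i => L i / ((n : ℝ) * q i)) LΩ)
    (R : Euc d → EReal) (hproper : ERealProper R) (hlsc : LowerSemicontinuous R)
    (hconvR : ERealConvexOn R)
    (U : Matrix (Fin d) (Fin d) ℝ) (hU : U.PosDef)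
    (hUle : (LΩ⁻¹ • (1 : Matrix (Fin d) (Fin d) ℝ) - U).PosSemidef)
    (wprev vprev wt : Euc d) (hwt : IsProxE R U⁻¹ (wprev - mdot U vprev) wt)
    (wnext : (Fin b → Fin n) → Euc d)
    (hwnext : ∀ ι : Fin b → Fin n, IsProxE R U⁻¹
      (wt - mdot U ((b : ℝ)⁻¹ •
        ∑ j : Fin b, (q (ι j) * (n : ℝ))⁻¹ • (gf (ι j) wt - gf (ι j) wprev) + vprev))
      (wnext ι)) :
    ∑ ι : Fin b → Fin n, (∏ j : Fin b, q (ι j)) * qf U⁻¹ (wnext ι - wt)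
      ≤ qf U⁻¹ (wt - wprev) := by
  rcases Nat.eq_zero_or_pos d with rfl | hd
  · simp [qf, PiLp.inner_apply]
  classical
  have hn' : (0:ℝ) < n := by exact_mod_cast hn
  have hb' : (0:ℝ) < b := by exact_mod_cast hb
  -- matrix facts
  have hMpd : (U⁻¹).PosDef := hU.inv
  have hs : (U⁻¹).IsHermitian := hMpd.1
  have hp : (U⁻¹).PosSemidef := hMpd.posSemidef
  have hUherm : U.IsHermitian := hU.1
  have hUpsd : U.PosSemidef := hU.posSemidef
  have hdet : IsUnit U.det := hU.det_pos.ne'.isUnit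
  have minv : ∀ v : Euc d, mdot U⁻¹ (mdot U v) = v := by
    intro v; rw [← mdot_mul, Matrix.nonsing_inv_mul U hdet, mdot_one]
  -- Lipschitz constants are nonnegative
  have hL0 : ∀ i, 0 ≤ L i := by
    intro i
    have h1 := hLip i (EuclideanSpace.single (⟨0, hd⟩ : Fin d) (1:ℝ)) 0
    have h2 : ‖(EuclideanSpace.single (⟨0, hd⟩ : Fin d) (1:ℝ)) - 0‖ = 1 := by
      simp [EuclideanSpace.norm_single]
    rw [h2, mul_one] at h1
    exact le_trans (norm_nonneg _) h1
  have hLΩ0 : 0 ≤ LΩ := by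
    obtain ⟨i, hi⟩ := hLΩ.1
    rw [← hi]
    exact div_nonneg (hL0 i) (mul_pos hn' (hq i)).le
  have hLle : ∀ i, L i ≤ LΩ * ((n:ℝ) * q i) := by
    intro i
    have h1 : L i / ((n:ℝ) * q i) ≤ LΩ := hLΩ.2 ⟨i, rfl⟩
    rwa [div_le_iff₀ (mul_pos hn' (hq i))] at h1
  set D := wt - wprev with hD
  set δ : Fin n → Euc d := fun i => gf i wt - gf i wprev with hδ
  -- quadratic form of U dominated by Euclidean norm
  have hqfU : ∀ v : Euc d, qf U v ≤ LΩ⁻¹ * ‖v‖^2 := by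
    intro v
    have h0 := qf_nonneg hUle v
    have h1 : qf (LΩ⁻¹ • (1 : Matrix (Fin d) (Fin d) ℝ) - U) v = LΩ⁻¹ * ‖v‖^2 - qf U v := by
      show ⟪v, mdot (LΩ⁻¹ • (1:Matrix (Fin d) (Fin d) ℝ) - U) v⟫ = _
      rw [mdot_matsub, mdot_matsmul, mdot_one, inner_sub_right, inner_smul_right,
        real_inner_self_eq_norm_sq]
      rfl
    linarith [h1 ▸ h0]
  -- monotonicity and cocoercivity of the gradients
  have hmono : ∀ i, 0 ≤ ⟪D, δ i⟫ := by
    intro i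
    show (0:ℝ) ≤ ⟪wt - wprev, gf i wt - gf i wprev⟫
    rw [real_inner_comm]
    exact grad_mono (hconvf i) (hgrad i) wt wprev
  have hcoco : ∀ i, ‖δ i‖^2 ≤ 2 * L i * ⟪D, δ i⟫ := by
    intro i
    show ‖gf i wt - gf i wprev‖^2 ≤ 2 * L i * ⟪wt - wprev, gf i wt - gf i wprev⟫
    rw [real_inner_comm]
    exact grad_coco (hconvf i) (hgrad i) (hLip i) wt wprev
  -- per-index bound on the quadratic correction
  have hper : ∀ i, q i * qf U (Zv gf q wt wprev i) ≤ 2 * ((n:ℝ)⁻¹ * ⟪D, δ i⟫) := by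
    intro i
    have hz : qf U (Zv gf q wt wprev i) = ((q i * (n:ℝ))⁻¹)^2 * qf U (δ i) := qf_smul _ _
    have h1 : qf U (δ i) ≤ LΩ⁻¹ * (2 * L i * ⟪D, δ i⟫) := by
      refine (hqfU (δ i)).trans ?_
      exact mul_le_mul_of_nonneg_left (hcoco i) (inv_nonneg.mpr hLΩ0)
    have hc0 : (0:ℝ) ≤ q i * ((q i * (n:ℝ))⁻¹)^2 := mul_nonneg (hq i).le (sq_nonneg _)
    calc q i * qf U (Zv gf q wt wprev i)
        = q i * ((q i * (n:ℝ))⁻¹)^2 * qf U (δ i) := by rw [hz]; ring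
      _ ≤ q i * ((q i * (n:ℝ))⁻¹)^2 * (LΩ⁻¹ * (2 * L i * ⟪D, δ i⟫)) :=
          mul_le_mul_of_nonneg_left h1 hc0
      _ ≤ 2 * ((n:ℝ)⁻¹ * ⟪D, δ i⟫) := by
          rcases eq_or_lt_of_le hLΩ0 with hL0' | hLpos
          · rw [← hL0', inv_zero]
            simp only [zero_mul, mul_zero]
            exact mul_nonneg (by norm_num) (mul_nonneg (inv_nonneg.mpr hn'.le) (hmono i))
          · have hqi' : q i ≠ 0 := (hq i).ne'
            have hn0 : (n:ℝ) ≠ 0 := hn'.ne'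
            have hLΩ' : LΩ ≠ 0 := hLpos.ne'
            have hcoeff : q i * ((q i * (n:ℝ))⁻¹)^2 * (LΩ⁻¹ * (2 * L i)) ≤ 2 * (n:ℝ)⁻¹ := by
              have e : q i * ((q i * (n:ℝ))⁻¹)^2 * (LΩ⁻¹ * (2 * L i))
                  = 2 * L i / (q i * (n:ℝ)^2 * LΩ) := by
                field_simp
              rw [e, div_le_iff₀ (mul_pos (mul_pos (hq i) (pow_pos hn' 2)) hLpos)]
              have e2 : 2 * (n:ℝ)⁻¹ * (q i * (n:ℝ)^2 * LΩ) = 2 * (LΩ * ((n:ℝ) * q i)) := by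
                field_simp
              rw [e2]
              linarith [hLle i]
            have h3 := mul_le_mul_of_nonneg_right hcoeff (hmono i)
            linarith [h3]
  -- per-batch contraction + expansion
  have key : ∀ ι : Fin b → Fin n, qf U⁻¹ (wnext ι - wt)
      ≤ qf U⁻¹ D - 2 * ⟪D, Dv gf q wt wprev ι⟫
        + ((b:ℝ)⁻¹ * ∑ j : Fin b, qf U (Zv gf q wt wprev (ι j))) := by
    intro ι
    have hwX : IsProxE R U⁻¹ (wt - mdot U (Dv gf q wt wprev ι + vprev)) (wnext ι) := hwnext ι
    have hcontr := prox_contract hproper hconvR hs hp hwX hwt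
    have e : (wt - mdot U (Dv gf q wt wprev ι + vprev)) - (wprev - mdot U vprev)
        = D - mdot U (Dv gf q wt wprev ι) := by
      rw [mdot_add, hD]; abel
    rw [e] at hcontr
    have hexp : qf U⁻¹ (D - mdot U (Dv gf q wt wprev ι))
        = qf U⁻¹ D - 2 * ⟪D, Dv gf q wt wprev ι⟫ + qf U (Dv gf q wt wprev ι) := by
      rw [qf_sub hs, minv]
      congr 1
      show ⟪mdot U (Dv gf q wt wprev ι), mdot U⁻¹ (mdot U (Dv gf q wt wprev ι))⟫ = _
      rw [minv, real_inner_comm]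
      rfl
    have hjen : qf U (Dv gf q wt wprev ι)
        ≤ (b:ℝ)⁻¹ * ∑ j : Fin b, qf U (Zv gf q wt wprev (ι j)) :=
      qf_avg_le hUherm hUpsd hb _
    rw [hexp] at hcontr
    linarith
  -- put it together
  have hpnn : ∀ ι : Fin b → Fin n, (0:ℝ) ≤ ∏ j : Fin b, q (ι j) :=
    fun ι => Finset.prod_nonneg (fun j _ => (hq (ι j)).le)
  have step1 : ∑ ι : Fin b → Fin n, (∏ j : Fin b, q (ι j)) * qf U⁻¹ (wnext ι - wt)
      ≤ ∑ ι : Fin b → Fin n, (∏ j : Fin b, q (ι j)) *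
          (qf U⁻¹ D - 2 * ⟪D, Dv gf q wt wprev ι⟫
            + ((b:ℝ)⁻¹ * ∑ j : Fin b, qf U (Zv gf q wt wprev (ι j)))) :=
    Finset.sum_le_sum (fun ι _ => mul_le_mul_of_nonneg_left (key ι) (hpnn ι))
  have hmass := pi_mass (b := b) hqs
  have esplit : ∀ ι : Fin b → Fin n, (∏ j : Fin b, q (ι j)) *
      (qf U⁻¹ D - 2 * ⟪D, Dv gf q wt wprev ι⟫
        + ((b:ℝ)⁻¹ * ∑ j : Fin b, qf U (Zv gf q wt wprev (ι j))))
      = qf U⁻¹ D * (∏ j : Fin b, q (ι j))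
        - 2 * ((∏ j : Fin b, q (ι j)) * ⟪D, Dv gf q wt wprev ι⟫)
        + (∏ j : Fin b, q (ι j)) * ((b:ℝ)⁻¹ * ∑ j : Fin b, qf U (Zv gf q wt wprev (ι j))) :=
    fun ι => by ring
  have hinner : ∀ ι : Fin b → Fin n, ⟪D, Dv gf q wt wprev ι⟫
      = (b:ℝ)⁻¹ * ∑ j : Fin b, ⟪D, Zv gf q wt wprev (ι j)⟫ := by
    intro ι
    show ⟪D, (b:ℝ)⁻¹ • ∑ j : Fin b, Zv gf q wt wprev (ι j)⟫ = _
    rw [inner_smul_right, inner_sum]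
  have T1 : ∑ ι : Fin b → Fin n, (∏ j : Fin b, q (ι j)) * ⟪D, Dv gf q wt wprev ι⟫
      = ∑ i, q i * ⟪D, Zv gf q wt wprev i⟫ := by
    have e : ∀ ι : Fin b → Fin n, (∏ j : Fin b, q (ι j)) * ⟪D, Dv gf q wt wprev ι⟫
        = (∏ j : Fin b, q (ι j)) * ((b:ℝ)⁻¹ * ∑ j : Fin b, ⟪D, Zv gf q wt wprev (ι j)⟫) :=
      fun ι => by rw [hinner ι]
    exact (Finset.sum_congr rfl (fun ι _ => e ι)).trans
      (pi_avg hqs hb (fun i => ⟪D, Zv gf q wt wprev i⟫))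
  have T2 : ∑ ι : Fin b → Fin n, (∏ j : Fin b, q (ι j)) *
      ((b:ℝ)⁻¹ * ∑ j : Fin b, qf U (Zv gf q wt wprev (ι j)))
      = ∑ i, q i * qf U (Zv gf q wt wprev i) :=
    pi_avg hqs hb (fun i => qf U (Zv gf q wt wprev i))
  have hZinner : ∀ i, q i * ⟪D, Zv gf q wt wprev i⟫ = (n:ℝ)⁻¹ * ⟪D, δ i⟫ := by
    intro i
    have : ⟪D, Zv gf q wt wprev i⟫ = (q i * (n:ℝ))⁻¹ * ⟪D, δ i⟫ := by
      show ⟪D, (q i * (n:ℝ))⁻¹ • δ i⟫ = _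
      rw [inner_smul_right]
    rw [this]
    have hqi := (hq i).ne'
    field_simp
  have final : ∑ i, q i * qf U (Zv gf q wt wprev i)
      ≤ 2 * ∑ i, q i * ⟪D, Zv gf q wt wprev i⟫ := by
    rw [Finset.mul_sum]
    apply Finset.sum_le_sum
    intro i _
    rw [hZinner i, ← mul_assoc, mul_comm 2 ((n:ℝ)⁻¹), mul_assoc]
    calc q i * qf U (Zv gf q wt wprev i) ≤ 2 * ((n:ℝ)⁻¹ * ⟪D, δ i⟫) := hper i
      _ = (n:ℝ)⁻¹ * (2 * ⟪D, δ i⟫) := by ring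
  calc ∑ ι : Fin b → Fin n, (∏ j : Fin b, q (ι j)) * qf U⁻¹ (wnext ι - wt)
      ≤ ∑ ι : Fin b → Fin n, (∏ j : Fin b, q (ι j)) *
          (qf U⁻¹ D - 2 * ⟪D, Dv gf q wt wprev ι⟫
            + ((b:ℝ)⁻¹ * ∑ j : Fin b, qf U (Zv gf q wt wprev (ι j)))) := step1
    _ = qf U⁻¹ D * (∑ ι : Fin b → Fin n, ∏ j : Fin b, q (ι j))
        - 2 * (∑ ι : Fin b → Fin n, (∏ j : Fin b, q (ι j)) * ⟪D, Dv gf q wt wprev ι⟫)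
        + ∑ ι : Fin b → Fin n, (∏ j : Fin b, q (ι j)) *
            ((b:ℝ)⁻¹ * ∑ j : Fin b, qf U (Zv gf q wt wprev (ι j))) := by
        rw [Finset.sum_congr rfl (fun ι _ => esplit ι), Finset.sum_add_distrib,
          Finset.sum_sub_distrib, ← Finset.mul_sum, ← Finset.mul_sum]
    _ = qf U⁻¹ D - 2 * ∑ i, q i * ⟪D, Zv gf q wt wprev i⟫
        + ∑ i, q i * qf U (Zv gf q wt wprev i) := by
        rw [hmass, T1, T2, mul_one]
    _ ≤ qf U⁻¹ D := by linarith [final]
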